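/- Suppose A is drawn from SSBM(n,x*,p⁺,p⁻,q⁺,q⁻) under Assumption 1, and let ρ = 1ᵀÃ1/n². Then E[ρ] = ((p⁺+q⁺) − ξ(p⁻+q⁻))/2 − (p⁺ − ξp⁻)/n, and with probability at least 1 − 2n^{−1/(2(α⁺+β⁺+1))} − 2n^{−1/(2(α⁻+β⁻+1))} one has |ρ − E[ρ]| ≤ (1+ξ)·log n / n^{3/2}. -/

import Mathlib

open MeasureTheory ProbabilityTheory Matrix

noncomputable section

/-- Entrywise positive part `A⁺` of a matrix. -/
def aPos {n : ℕ} (A : Matrix (Fin n) (Fin n) ℝ) : Matrix (Fin n) (Fin n) ℝ :=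
  Matrix.of fun i j => max (A i j) 0

/-- Entrywise negative part `A⁻` of a matrix. -/
def aNeg {n : ℕ} (A : Matrix (Fin n) (Fin n) ℝ) : Matrix (Fin n) (Fin n) ℝ :=
  Matrix.of fun i j => max (-(A i j)) 0

/-- Euclidean norm of a vector in `ℝⁿ`. -/
def vnorm {n : ℕ} (v : Fin n → ℝ) : ℝ := Real.sqrt (∑ i, v i ^ 2)

/-- Entrywise sign of a vector: `1` on nonnegative entries, `-1` otherwise. -/
def signVec {n : ℕ} (v : Fin n → ℝ) : Fin n → ℝ := fun i => if 0 ≤ v i then 1 else -1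

/-- Real cube root. -/
def cbrt (x : ℝ) : ℝ := if 0 ≤ x then x ^ ((1 : ℝ)/3) else -((-x) ^ ((1 : ℝ)/3))

/-- The signed stochastic block model `SSBM(n, xs, pp, pm, qp, qm)`:
`A` is a random symmetric `{-1,0,1}`-matrix with zero diagonal, whose upper triangular
entries are independent, equal to `1` (resp. `-1`) with probability `pp` (resp. `pm`)
within communities and `qp` (resp. `qm`) across communities, relative to the
community label vector `xs ∈ {±1}ⁿ` with `1ᵀ xs = 0`. -/
structure IsSSBM {Ω : Type} [MeasurableSpace Ω] (P : Measure Ω)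
    {n : ℕ} (xs : Fin n → ℝ) (pp pm qp qm : ℝ)
    (A : Ω → Matrix (Fin n) (Fin n) ℝ) : Prop where
  pp_pos : 0 < pp
  pm_pos : 0 < pm
  qp_pos : 0 < qp
  qm_pos : 0 < qm
  p_sum_le : pp + pm ≤ 1
  q_sum_le : qp + qm ≤ 1
  labels : ∀ i, xs i = 1 ∨ xs i = -1
  balanced : ∑ i, xs i = 0
  meas : ∀ i j, Measurable fun ω => A ω i j
  symm : ∀ ω i j, A ω i j = A ω j i
  diag : ∀ ω i, A ω i i = 0
  vals : ∀ ω i j, A ω i j = 1 ∨ A ω i j = -1 ∨ A ω i j = 0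
  indep : iIndepFun
      (fun (p : {p : Fin n × Fin n // p.1 < p.2}) ω => A ω p.1.1 p.1.2) P
  probIn : ∀ i j : Fin n, i < j → xs i * xs j = 1 →
      P {ω | A ω i j = 1} = ENNReal.ofReal pp ∧ P {ω | A ω i j = -1} = ENNReal.ofReal pm
  probOut : ∀ i j : Fin n, i < j → xs i * xs j = -1 →
      P {ω | A ω i j = 1} = ENNReal.ofReal qp ∧ P {ω | A ω i j = -1} = ENNReal.ofReal qm

/-- Sum of the strictly upper triangular entries of a matrix. -/
def upperSum {n : ℕ} (M : Matrix (Fin n) (Fin n) ℝ) : ℝ :=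
  ∑ i, ∑ j, if i < j then M i j else 0

/-- The all-ones `n × n` matrix. -/
def Jmat (n : ℕ) : Matrix (Fin n) (Fin n) ℝ := Matrix.of fun _ _ => 1

/-- The weight `ξ = log(β⁻/α⁻)/log(α⁺/β⁺)`. -/
def xiOf (αp βp αm βm : ℝ) : ℝ := Real.log (βm / αm) / Real.log (αp / βp)

/-- `Ã = A⁺ - ξ A⁻`. -/
def Atil {Ω : Type} {n : ℕ} (ξ : ℝ) (A : Ω → Matrix (Fin n) (Fin n) ℝ) (ω : Ω) :
    Matrix (Fin n) (Fin n) ℝ := aPos (A ω) - ξ • aNeg (A ω)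

/-- `ρ = 1ᵀ Ã 1 / n²`. -/
def rhoOf {Ω : Type} {n : ℕ} (ξ : ℝ) (A : Ω → Matrix (Fin n) (Fin n) ℝ) (ω : Ω) : ℝ :=
  (∑ i, ∑ j, Atil ξ A ω i j) / (n : ℝ) ^ 2

/-- `W = Ã - ρ J`. -/
def Wof {Ω : Type} {n : ℕ} (ξ : ℝ) (A : Ω → Matrix (Fin n) (Fin n) ℝ) (ω : Ω) :
    Matrix (Fin n) (Fin n) ℝ := Atil ξ A ω - rhoOf ξ A ω • Jmat n

/-- `μ` is an eigenvalue of the matrix `M`. -/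
def IsEigenvalue {n : ℕ} (M : Matrix (Fin n) (Fin n) ℝ) (μ : ℝ) : Prop :=
  ∃ v : Fin n → ℝ, v ≠ 0 ∧ M.mulVec v = μ • v

/-- The ℓ₂ operator (spectral) norm of a real square matrix. -/
def specNorm {n : ℕ} (M : Matrix (Fin n) (Fin n) ℝ) : ℝ :=
  ‖Matrix.toEuclideanCLM (𝕜 := ℝ) M‖

/-- Entrywise expectation of a random matrix. -/
def Emat {Ω : Type} [MeasurableSpace Ω] (P : Measure Ω) {n : ℕ}
    (M : Ω → Matrix (Fin n) (Fin n) ℝ) : Matrix (Fin n) (Fin n) ℝ :=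
  Matrix.of fun i j => ∫ ω, M ω i j ∂P


/-! ### Auxiliary lemmas -/

section AuxLemmas

lemma exp_taylor3 {x : ℝ} (hx : |x| ≤ 1) :
    Real.exp x ≤ 1 + x + x ^ 2 / 2 + 2 / 9 * |x| ^ 3 := by
  have h := Real.exp_bound hx (n := 3) (by norm_num)
  have h2 := (abs_sub_le_iff.1 h).1
  have h3 : ∑ m ∈ Finset.range 3, x ^ m / m.factorial = 1 + x + x ^ 2 / 2 := by
    simp [Finset.sum_range_succ, Nat.factorial]
  rw [h3] at h2
  have h4 : (|x| ^ 3 * ((3 : ℕ).succ / ((3 : ℕ).factorial * (3 : ℕ)) : ℝ)) = 2 / 9 * |x| ^ 3 := by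
    norm_num [Nat.factorial]; ring
  rw [h4] at h2
  linarith

lemma sum_symm_split' {n : ℕ} (g : Fin n → Fin n → ℝ) (hsymm : ∀ i j, g i j = g j i) :
    ∑ i, ∑ j, g i j = 2 * (∑ i, ∑ j, if i < j then g i j else 0) + ∑ i, g i i := by
  have key : ∀ i j : Fin n, g i j = (if i < j then g i j else 0) + (if j < i then g i j else 0)
      + (if i = j then g i j else 0) := by
    intro i j
    rcases lt_trichotomy i j with h|h|h
    · simp [h, h.ne, not_lt_of_gt h]
    · simp [h, lt_irrefl]
    · simp [h, h.ne', not_lt_of_gt h]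
  have h1 : ∑ i, ∑ j, g i j = (∑ i, ∑ j, if i < j then g i j else 0)
      + (∑ i, ∑ j, if j < i then g i j else 0) + (∑ i, ∑ j, if i = j then g i j else 0) := by
    rw [← Finset.sum_add_distrib, ← Finset.sum_add_distrib]
    refine Finset.sum_congr rfl fun i _ => ?_
    rw [← Finset.sum_add_distrib, ← Finset.sum_add_distrib]
    exact Finset.sum_congr rfl fun j _ => key i j
  have h2 : (∑ i, ∑ j, if j < i then g i j else 0) = ∑ i, ∑ j, if i < j then g i j else 0 := by
    rw [Finset.sum_comm]
    refine Finset.sum_congr rfl fun i _ => Finset.sum_congr rfl fun j _ => ?_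
    by_cases h : i < j <;> simp [h, hsymm]
  have h3 : (∑ i, ∑ j, if i = j then g i j else 0) = ∑ i, g i i := by
    refine Finset.sum_congr rfl fun i _ => ?_
    simp
  rw [h1, h2, h3]; ring

lemma sum_pairs {n : ℕ} (f : Fin n × Fin n → ℝ) :
    ∑ p : {p : Fin n × Fin n // p.1 < p.2}, f p.1 =
      ∑ i, ∑ j, if i < j then f (i, j) else 0 := by
  classical
  rw [← Finset.sum_subtype (Finset.univ.filter fun q : Fin n × Fin n => q.1 < q.2)
      (fun q => by simp) f]
  rw [Finset.sum_filter, ← Finset.univ_product_univ, Finset.sum_product]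

lemma sum_pairs' {n : ℕ} (f : Fin n → Fin n → ℝ) :
    ∑ p : {p : Fin n × Fin n // p.1 < p.2}, f p.1.1 p.1.2 =
      ∑ i, ∑ j, if i < j then f i j else 0 := by
  simpa using sum_pairs (fun q => f q.1 q.2)

lemma count_pairs (n : ℕ) :
    ∑ i : Fin n, ∑ j : Fin n, (if i < j then (1:ℝ) else 0) = ((n:ℝ)^2 - n)/2 := by
  have h := sum_symm_split' (n := n) (fun _ _ => (1:ℝ)) (fun _ _ => rfl)
  have h1 : ∑ _i : Fin n, ∑ _j : Fin n, (1:ℝ) = (n:ℝ) * n := by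
    simp [Finset.sum_const, Finset.card_univ, mul_comm]
  have h2 : ∑ _i : Fin n, (1:ℝ) = (n:ℝ) := by simp
  rw [h1, h2] at h
  nlinarith [h]

lemma count_cross {n : ℕ} {xs : Fin n → ℝ} (hlab : ∀ i, xs i = 1 ∨ xs i = -1)
    (hbal : ∑ i, xs i = 0) :
    ∑ i : Fin n, ∑ j : Fin n, (if i < j then xs i * xs j else 0) = -((n:ℝ)/2) := by
  have h := sum_symm_split' (fun i j => xs i * xs j) (fun i j => mul_comm _ _)
  have h1 : ∑ i : Fin n, ∑ j : Fin n, xs i * xs j = 0 := by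
    rw [← Finset.sum_mul_sum, hbal, zero_mul]
  have h2 : ∑ i : Fin n, xs i * xs i = (n:ℝ) := by
    have hx : ∀ i, xs i * xs i = 1 := fun i => by rcases hlab i with h|h <;> rw [h] <;> norm_num
    simp only [hx]
    simp
  rw [h1, h2] at h
  linarith

variable {Ω : Type} [MeasurableSpace Ω] {P : Measure Ω}

lemma bern_integrable [IsProbabilityMeasure P] {Y : Ω → ℝ} (hm : Measurable Y)
    (h01 : ∀ ω, Y ω = 0 ∨ Y ω = 1) : Integrable Y P := by
  refine ⟨hm.aestronglyMeasurable, ?_⟩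
  apply MeasureTheory.HasFiniteIntegral.of_bounded (C := 1)
  filter_upwards with ω
  rcases h01 ω with h|h <;> simp [h]

lemma bern_mean_mem {Y : Ω → ℝ} [IsProbabilityMeasure P] (hm : Measurable Y)
    (h01 : ∀ ω, Y ω = 0 ∨ Y ω = 1) :
    0 ≤ ∫ ω, Y ω ∂P ∧ ∫ ω, Y ω ∂P ≤ 1 := by
  constructor
  · exact integral_nonneg fun ω => by rcases h01 ω with h|h <;> simp [h]
  · calc ∫ ω, Y ω ∂P ≤ ∫ _, (1:ℝ) ∂P := by
          refine integral_mono (bern_integrable hm h01) (integrable_const 1) fun ω => ?_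
          rcases h01 ω with h|h <;> simp [h]
    _ = 1 := by simp

lemma bern_mgf {Y : Ω → ℝ} [IsProbabilityMeasure P] (hm : Measurable Y)
    (h01 : ∀ ω, Y ω = 0 ∨ Y ω = 1) (c : ℝ) :
    mgf Y P c = 1 + (Real.exp c - 1) * ∫ ω, Y ω ∂P := by
  have hpt : (fun ω => Real.exp (c * Y ω)) = fun ω => 1 + (Real.exp c - 1) * Y ω := by
    funext ω
    rcases h01 ω with h|h <;> simp [h]
  rw [mgf, hpt]
  rw [integral_add (integrable_const 1) ((bern_integrable hm h01).const_mul _)]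
  rw [integral_const_mul]; simp

lemma bern_mgf_le {Y : Ω → ℝ} [IsProbabilityMeasure P] (hm : Measurable Y)
    (h01 : ∀ ω, Y ω = 0 ∨ Y ω = 1) (c : ℝ) :
    mgf Y P c ≤ Real.exp ((Real.exp c - 1) * ∫ ω, Y ω ∂P) := by
  rw [bern_mgf hm h01 c, add_comm]
  exact Real.add_one_le_exp _

lemma bern_exp_integrable {Y : Ω → ℝ} [IsProbabilityMeasure P] (hm : Measurable Y)
    (h01 : ∀ ω, Y ω = 0 ∨ Y ω = 1) (c : ℝ) :
    Integrable (fun ω => Real.exp (c * Y ω)) P := by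
  refine ⟨((hm.const_mul c).exp).aestronglyMeasurable, ?_⟩
  apply MeasureTheory.HasFiniteIntegral.of_bounded (C := max 1 (Real.exp c))
  filter_upwards with ω
  rcases h01 ω with h|h
  · simp [h]
  · simp only [h, mul_one, Real.norm_eq_abs, abs_of_pos (Real.exp_pos _)]
    exact le_max_right _ _

/-- Generic one-sided Chernoff bound for 0/1-valued independent variables, sign `c = ±1`. -/
lemma chernoff_gen {ι : Type} [Fintype ι] [IsProbabilityMeasure P] (Y : ι → Ω → ℝ)
    (hmeas : ∀ i, Measurable (Y i))
    (hind : iIndepFun Y P)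
    (h01 : ∀ i ω, Y i ω = 0 ∨ Y i ω = 1)
    (c t u : ℝ) (ht : 0 ≤ t) :
    (P {ω | u ≤ ∑ i, c * (Y i ω - ∫ ω', Y i ω' ∂P)}).toReal ≤
      Real.exp ((∑ i, ∫ ω', Y i ω' ∂P) * (Real.exp (c * t) - 1 - c * t) - t * u) := by
  classical
  set r : ι → ℝ := fun i => ∫ ω', Y i ω' ∂P with hr
  set m : ℝ := ∑ i, r i with hm'
  set Z : ι → Ω → ℝ := fun i ω => c * Y i ω with hZ
  have hZmeas : ∀ i, Measurable (Z i) := fun i => (hmeas i).const_mul c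
  have hZind : iIndepFun Z P := by
    have := hind.comp (fun _ => fun x : ℝ => c * x) (fun _ => measurable_const_mul c)
    exact this
  have hset : {ω | u ≤ ∑ i, c * (Y i ω - r i)} = {ω | c * m + u ≤ (∑ i, Z i) ω} := by
    ext ω
    simp only [Set.mem_setOf_eq, Finset.sum_apply, hZ]
    constructor <;> intro h
    · have : ∑ i, c * (Y i ω - r i) = (∑ i, c * Y i ω) - c * m := by
        rw [hm', Finset.mul_sum, ← Finset.sum_sub_distrib]
        exact Finset.sum_congr rfl fun i _ => by ring
      linarith [this ▸ h]
    · have : ∑ i, c * (Y i ω - r i) = (∑ i, c * Y i ω) - c * m := by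
        rw [hm', Finset.mul_sum, ← Finset.sum_sub_distrib]
        exact Finset.sum_congr rfl fun i _ => by ring
      linarith [this]
  rw [hset]
  have hint : ∀ i ∈ Finset.univ, Integrable (fun ω => Real.exp (t * Z i ω)) P := by
    intro i _
    have : (fun ω => Real.exp (t * Z i ω)) = fun ω => Real.exp ((t * c) * Y i ω) := by
      funext ω; rw [hZ]; ring_nf
    rw [this]
    exact bern_exp_integrable (hmeas i) (h01 i) _
  have hchern := measure_ge_le_exp_mul_mgf (μ := P) (X := ∑ i, Z i) (t := t) (c * m + u) ht
      (hZind.integrable_exp_mul_sum hZmeas hint)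
  refine hchern.trans ?_
  have hmgf : mgf (∑ i, Z i) P t = ∏ i, mgf (Z i) P t := hZind.mgf_sum hZmeas Finset.univ
  have hmgfi : ∀ i, mgf (Z i) P t ≤ Real.exp ((Real.exp (c * t) - 1) * r i) := by
    intro i
    have h1 : mgf (Z i) P t = mgf (Y i) P (t * c) := by
      rw [mgf, mgf]
      congr 1; funext ω; rw [hZ]; ring_nf
    rw [h1]
    rw [mul_comm c t]
    exact bern_mgf_le (P := P) (hmeas i) (h01 i) (t * c)
  have hmgfnn : ∀ i, 0 ≤ mgf (Z i) P t := by
    intro i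
    have h1 : mgf (Z i) P t = 1 + (Real.exp (c * t) - 1) * r i := by
      have h2 : mgf (Z i) P t = mgf (Y i) P (t * c) := by
        rw [mgf, mgf]; congr 1; funext ω; rw [hZ]; ring_nf
      rw [h2, bern_mgf (hmeas i) (h01 i), mul_comm t c]
    rw [h1]
    rcases bern_mean_mem (P := P) (hmeas i) (h01 i) with ⟨h0, h1'⟩
    rcases le_or_gt 1 (Real.exp (c * t)) with h|h
    · nlinarith
    · nlinarith [Real.exp_pos (c * t)]
  have hprod : ∏ i, mgf (Z i) P t ≤ Real.exp ((Real.exp (c*t) - 1) * m) := by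
    calc ∏ i, mgf (Z i) P t ≤ ∏ i, Real.exp ((Real.exp (c * t) - 1) * r i) :=
          Finset.prod_le_prod (fun i _ => hmgfnn i) (fun i _ => hmgfi i)
      _ = Real.exp ((Real.exp (c*t) - 1) * m) := by
          rw [← Real.exp_sum, hm', Finset.mul_sum]
  calc Real.exp (-t * (c * m + u)) * mgf (∑ i, Z i) P t
      ≤ Real.exp (-t * (c * m + u)) * Real.exp ((Real.exp (c*t) - 1) * m) := by
        rw [hmgf]
        exact mul_le_mul_of_nonneg_left hprod (Real.exp_pos _).le
    _ = Real.exp (m * (Real.exp (c*t) - 1) - t * c * m - t * u) := by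
        rw [← Real.exp_add]; ring_nf
    _ ≤ Real.exp (m * (Real.exp (c * t) - 1 - c * t) - t * u) := by
        apply Real.exp_le_exp.2; ring_nf; rfl

/-- Two-sided Bernstein-type bound for sums of independent 0/1 variables. -/
lemma bernoulli_conc {ι : Type} [Fintype ι] [IsProbabilityMeasure P] (Y : ι → Ω → ℝ)
    (hmeas : ∀ i, Measurable (Y i))
    (hind : iIndepFun Y P)
    (h01 : ∀ i ω, Y i ω = 0 ∨ Y i ω = 1)
    (t u : ℝ) (ht0 : 0 ≤ t) (ht1 : t ≤ 1) :
    (P {ω | u < |∑ i, (Y i ω - ∫ ω', Y i ω' ∂P)|}).toReal ≤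
      2 * Real.exp ((∑ i, ∫ ω', Y i ω' ∂P) * (t ^ 2 / 2 + 2 / 9 * t ^ 3) - t * u) := by
  classical
  set r : ι → ℝ := fun i => ∫ ω', Y i ω' ∂P with hr
  set m : ℝ := ∑ i, r i with hm'
  have hm0 : 0 ≤ m := Finset.sum_nonneg fun i _ => (bern_mean_mem (hmeas i) (h01 i)).1
  have habs : |t| ≤ 1 := by rwa [abs_of_nonneg ht0]
  have habs' : |(-t)| ≤ 1 := by rwa [abs_neg]
  have hub : Real.exp (1 * t) - 1 - 1 * t ≤ t ^ 2 / 2 + 2 / 9 * t ^ 3 := by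
    have := exp_taylor3 habs
    rw [abs_of_nonneg ht0] at this
    rw [one_mul]
    linarith
  have hlb : Real.exp ((-1) * t) - 1 - (-1) * t ≤ t ^ 2 / 2 + 2 / 9 * t ^ 3 := by
    have := exp_taylor3 habs'
    rw [abs_neg, abs_of_nonneg ht0, neg_sq] at this
    rw [neg_one_mul]
    linarith
  have hA := chernoff_gen Y hmeas hind h01 1 t u ht0
  have hB := chernoff_gen Y hmeas hind h01 (-1) t u ht0
  have hsub : {ω | u < |∑ i, (Y i ω - r i)|} ⊆
      {ω | u ≤ ∑ i, (1:ℝ) * (Y i ω - r i)} ∪ {ω | u ≤ ∑ i, (-1:ℝ) * (Y i ω - r i)} := by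
    intro ω hω
    simp only [Set.mem_setOf_eq] at hω
    simp only [Set.mem_union, Set.mem_setOf_eq]
    have hsum1 : ∑ i, (1:ℝ) * (Y i ω - r i) = ∑ i, (Y i ω - r i) := by simp
    have hsum2 : ∑ i, (-1:ℝ) * (Y i ω - r i) = -∑ i, (Y i ω - r i) := by
      rw [← Finset.sum_neg_distrib]
      exact Finset.sum_congr rfl fun i _ => by ring
    rcases abs_cases (∑ i, (Y i ω - r i)) with ⟨heq, _⟩|⟨heq, _⟩
    · left; rw [hsum1, ← heq]; exact hω.le
    · right; rw [hsum2, ← heq]; exact hω.le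
  have hmono : (P {ω | u < |∑ i, (Y i ω - r i)|}).toReal ≤
      (P {ω | u ≤ ∑ i, (1:ℝ) * (Y i ω - r i)}).toReal +
      (P {ω | u ≤ ∑ i, (-1:ℝ) * (Y i ω - r i)}).toReal := by
    have h1 : P {ω | u < |∑ i, (Y i ω - r i)|} ≤
        P {ω | u ≤ ∑ i, (1:ℝ) * (Y i ω - r i)} + P {ω | u ≤ ∑ i, (-1:ℝ) * (Y i ω - r i)} :=
      le_trans (measure_mono hsub) (measure_union_le _ _)
    have h2 := ENNReal.toReal_mono (by finiteness) h1
    rwa [ENNReal.toReal_add (by finiteness) (by finiteness)] at h2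
  have hexp1 : Real.exp (m * (Real.exp (1 * t) - 1 - 1 * t) - t * u) ≤
      Real.exp (m * (t ^ 2 / 2 + 2 / 9 * t ^ 3) - t * u) := by
    apply Real.exp_le_exp.2
    have := mul_le_mul_of_nonneg_left hub hm0
    linarith
  have hexp2 : Real.exp (m * (Real.exp ((-1) * t) - 1 - (-1) * t) - t * u) ≤
      Real.exp (m * (t ^ 2 / 2 + 2 / 9 * t ^ 3) - t * u) := by
    apply Real.exp_le_exp.2
    have := mul_le_mul_of_nonneg_left hlb hm0
    linarith
  calc (P {ω | u < |∑ i, (Y i ω - r i)|}).toReal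
      ≤ _ + _ := hmono
    _ ≤ Real.exp (m * (t ^ 2 / 2 + 2 / 9 * t ^ 3) - t * u) +
        Real.exp (m * (t ^ 2 / 2 + 2 / 9 * t ^ 3) - t * u) := by
        exact add_le_add (hA.trans hexp1) (hB.trans hexp2)
    _ = 2 * Real.exp (m * (t ^ 2 / 2 + 2 / 9 * t ^ 3) - t * u) := by ring

lemma arith_key (R L s m : ℝ) (hR : 2 ≤ R) (hs : 1 < s) (hL : 0 < L)
    (hm0 : 0 ≤ m) (hm : m ≤ R ^ 2 * L / 4 * (s - 1)) :
    m * ((2/(R*s)) ^ 2 / 2 + 2 / 9 * (2/(R*s)) ^ 3) - (2/(R*s)) * (R * L / 2) ≤ -(L/(2*s)) := by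
  have hR0 : (0:ℝ) < R := by linarith
  have hs0 : (0:ℝ) < s := by linarith
  have h1 : (2/(R*s)) ^ 2 / 2 + 2 / 9 * (2/(R*s)) ^ 3
      = 2/(R^2*s^2) + 16/(9*R^3*s^3) := by
    field_simp
    ring
  have hfac : (0:ℝ) ≤ 2/(R^2*s^2) + 16/(9*R^3*s^3) := by positivity
  have h2 : m * ((2/(R*s)) ^ 2 / 2 + 2 / 9 * (2/(R*s)) ^ 3)
      ≤ (R ^ 2 * L / 4 * (s - 1)) * (2/(R^2*s^2) + 16/(9*R^3*s^3)) := by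
    rw [h1]; exact mul_le_mul_of_nonneg_right hm hfac
  have h3 : (2/(R*s)) * (R * L / 2) = L / s := by
    field_simp
  have h4 : (R ^ 2 * L / 4 * (s - 1)) * (2/(R^2*s^2) + 16/(9*R^3*s^3))
      = L*(s-1)/(2*s^2) + 4*L*(s-1)/(9*R*s^3) := by
    field_simp
    ring
  have h5 : L*(s-1)/(2*s^2) + 4*L*(s-1)/(9*R*s^3) ≤ L/s - L/(2*s) := by
    have h6 : L/s - L/(2*s) = L/(2*s) := by ring
    rw [h6, div_add_div _ _ (by positivity) (by positivity),
      div_le_div_iff₀ (by positivity) (by positivity)]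
    nlinarith [mul_pos hL (pow_pos hs0 4), mul_pos hL (pow_pos hs0 3),
      mul_pos (mul_pos hL (pow_pos hs0 4)) hR0, mul_pos (mul_pos hL (pow_pos hs0 3)) hR0,
      mul_nonneg (mul_nonneg hL.le (pow_pos hs0 3).le) (sub_nonneg.2 hs.le)]
  rw [h3]
  calc m * ((2/(R*s)) ^ 2 / 2 + 2 / 9 * (2/(R*s)) ^ 3) - L/s
      ≤ (L*(s-1)/(2*s^2) + 4*L*(s-1)/(9*R*s^3)) - L/s := by rw [← h4]; linarith
    _ ≤ (L/s - L/(2*s)) - L/s := by linarith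
    _ = -(L/(2*s)) := by ring

lemma bernoulli_tail {ι : Type} [Fintype ι] [IsProbabilityMeasure P] (Y : ι → Ω → ℝ)
    (hmeas : ∀ i, Measurable (Y i))
    (hind : iIndepFun Y P)
    (h01 : ∀ i ω, Y i ω = 0 ∨ Y i ω = 1)
    (n : ℕ) (hn : 4 ≤ n) (s : ℝ) (hs : 1 < s)
    (hmle : (∑ i, ∫ ω', Y i ω' ∂P) ≤ (n:ℝ) * Real.log n / 4 * (s - 1)) :
    (P {ω | Real.sqrt n * Real.log n / 2 < |∑ i, (Y i ω - ∫ ω', Y i ω' ∂P)|}).toReal ≤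
      2 * (n:ℝ) ^ (-(1/(2*s))) := by
  have hn4 : (4:ℝ) ≤ (n:ℝ) := by exact_mod_cast hn
  have hn0 : (0:ℝ) < n := by linarith
  have hL : 0 < Real.log n := Real.log_pos (by linarith)
  have hR : 2 ≤ Real.sqrt n := by
    rw [show (2:ℝ) = Real.sqrt 4 by rw [show (4:ℝ) = 2^2 by norm_num, Real.sqrt_sq]; norm_num]
    exact Real.sqrt_le_sqrt hn4
  have hR2 : (Real.sqrt n) ^ 2 = (n:ℝ) := Real.sq_sqrt hn0.le
  set R := Real.sqrt n with hRdef
  set L := Real.log n with hLdef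
  set t := 2/(R*s) with htdef
  have hs0 : (0:ℝ) < s := by linarith
  have hR0 : (0:ℝ) < R := by linarith
  have ht0 : 0 ≤ t := by positivity
  have ht1 : t ≤ 1 := by
    rw [htdef, div_le_one (by positivity)]
    nlinarith
  have hm0 : 0 ≤ ∑ i, ∫ ω', Y i ω' ∂P :=
    Finset.sum_nonneg fun i _ => (bern_mean_mem (hmeas i) (h01 i)).1
  have hmle' : (∑ i, ∫ ω', Y i ω' ∂P) ≤ R ^ 2 * L / 4 * (s - 1) := by
    rw [hR2]; exact hmle
  have hkey := arith_key R L s (∑ i, ∫ ω', Y i ω' ∂P) hR hs hL hm0 hmle'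
  have hconc := bernoulli_conc Y hmeas hind h01 t (R * L / 2) ht0 ht1
  refine hconc.trans ?_
  have hexp : Real.exp ((∑ i, ∫ ω', Y i ω' ∂P) * (t ^ 2 / 2 + 2 / 9 * t ^ 3) - t * (R * L / 2))
      ≤ Real.exp (-(L/(2*s))) := Real.exp_le_exp.2 hkey
  have hrpow : Real.exp (-(L/(2*s))) = (n:ℝ) ^ (-(1/(2*s))) := by
    rw [Real.rpow_def_of_pos hn0, hLdef]
    congr 1
    ring
  rw [← hrpow]
  linarith

end AuxLemmas

section SSBMAux

variable {Ω : Type} [MeasurableSpace Ω] {P : Measure Ω} {n : ℕ} {xs : Fin n → ℝ}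
  {pp pm qp qm : ℝ} {A : Ω → Matrix (Fin n) (Fin n) ℝ}

lemma ssbm_prod_pm (hA : IsSSBM P xs pp pm qp qm A) (i j : Fin n) :
    xs i * xs j = 1 ∨ xs i * xs j = -1 := by
  rcases hA.labels i with h|h <;> rcases hA.labels j with h'|h' <;> rw [h, h'] <;> norm_num

lemma ssbm_pos_mean (hA : IsSSBM P xs pp pm qp qm A) {i j : Fin n} (hij : i < j) :
    ∫ ω, max (A ω i j) 0 ∂P = (pp + qp)/2 + (pp - qp)/2 * (xs i * xs j) := by
  have hms : MeasurableSet {ω | A ω i j = 1} := hA.meas i j (measurableSet_singleton 1)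
  have hind : (fun ω => max (A ω i j) 0) =
      Set.indicator {ω | A ω i j = 1} (fun _ => (1:ℝ)) := by
    funext ω
    rcases hA.vals ω i j with h|h|h
    · rw [Set.indicator_of_mem (by exact h), h]; norm_num
    · rw [Set.indicator_of_notMem (by norm_num [Set.mem_setOf_eq, h]), h]; norm_num
    · rw [Set.indicator_of_notMem (by norm_num [Set.mem_setOf_eq, h]), h]; norm_num
  rw [hind, integral_indicator_const (1:ℝ) hms, smul_eq_mul, mul_one]
  rcases ssbm_prod_pm hA i j with h|h
  · rw [measureReal_def, (hA.probIn i j hij h).1, ENNReal.toReal_ofReal hA.pp_pos.le, h]; ring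
  · rw [measureReal_def, (hA.probOut i j hij h).1, ENNReal.toReal_ofReal hA.qp_pos.le, h]; ring

lemma ssbm_neg_mean (hA : IsSSBM P xs pp pm qp qm A) {i j : Fin n} (hij : i < j) :
    ∫ ω, max (-(A ω i j)) 0 ∂P = (pm + qm)/2 + (pm - qm)/2 * (xs i * xs j) := by
  have hms : MeasurableSet {ω | A ω i j = -1} := hA.meas i j (measurableSet_singleton (-1))
  have hind : (fun ω => max (-(A ω i j)) 0) =
      Set.indicator {ω | A ω i j = -1} (fun _ => (1:ℝ)) := by
    funext ω
    rcases hA.vals ω i j with h|h|h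
    · rw [Set.indicator_of_notMem (by norm_num [Set.mem_setOf_eq, h]), h]; norm_num
    · rw [Set.indicator_of_mem (by exact h), h]; norm_num
    · rw [Set.indicator_of_notMem (by norm_num [Set.mem_setOf_eq, h]), h]; norm_num
  rw [hind, integral_indicator_const (1:ℝ) hms, smul_eq_mul, mul_one]
  rcases ssbm_prod_pm hA i j with h|h
  · rw [measureReal_def, (hA.probIn i j hij h).2, ENNReal.toReal_ofReal hA.pm_pos.le, h]; ring
  · rw [measureReal_def, (hA.probOut i j hij h).2, ENNReal.toReal_ofReal hA.qm_pos.le, h]; ring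

end SSBMAux

set_option maxHeartbeats 2000000 in
/-- Concentration of `ρ = 1ᵀÃ1/n²` where `Ã = A⁺ − ξA⁻`: under Assumption 1,
`E[ρ] = ((p⁺+q⁺) − ξ(p⁻+q⁻))/2 − (p⁺ − ξp⁻)/n`, and with probability at least
`1 − 2n^{−1/(2(α⁺+β⁺+1))} − 2n^{−1/(2(α⁻+β⁻+1))}` one has
`|ρ − E[ρ]| ≤ (1+ξ) log n / n^{3/2}`. -/
theorem stmt_6 (αp βp αm βm : ℝ)
    (hβp : 0 < βp) (hαp : βp < αp) (hαm : 0 < αm) (hβm : αm < βm)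
    (n : ℕ) (hn : 2 ≤ n) (heven : Even n)
    (pp pm qp qm ξ : ℝ)
    (hpp : pp = αp * Real.log n / n) (hpm : pm = αm * Real.log n / n)
    (hqp : qp = βp * Real.log n / n) (hqm : qm = βm * Real.log n / n)
    (hξ : ξ = xiOf αp βp αm βm)
    (Ω : Type) (mΩ : MeasurableSpace Ω) (P : Measure Ω) (hP : IsProbabilityMeasure P)
    (xs : Fin n → ℝ) (A : Ω → Matrix (Fin n) (Fin n) ℝ)
    (hA : IsSSBM P xs pp pm qp qm A) :
    (∫ ω, rhoOf ξ A ω ∂P) = ((pp + qp) - ξ * (pm + qm)) / 2 - (pp - ξ * pm) / n ∧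
    (P {ω | |rhoOf ξ A ω - (((pp + qp) - ξ * (pm + qm)) / 2 - (pp - ξ * pm) / n)| ≤
        (1 + ξ) * Real.log n / (n : ℝ) ^ ((3 : ℝ) / 2)}).toReal ≥
      1 - 2 * (n : ℝ) ^ (-(1 / (2 * (αp + βp + 1))))
        - 2 * (n : ℝ) ^ (-(1 / (2 * (αm + βm + 1)))) := by
  haveI := hP
  have hn1 : (1:ℝ) < n := by exact_mod_cast Nat.lt_of_lt_of_le one_lt_two hn
  have hn0 : (0:ℝ) < n := by linarith
  have hn0' : (n:ℝ) ≠ 0 := ne_of_gt hn0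
  have hL0 : 0 < Real.log n := Real.log_pos hn1
  have hαp0 : 0 < αp := lt_trans hβp hαp
  have hβm0 : 0 < βm := lt_trans hαm hβm
  have hξ0 : 0 ≤ ξ := by
    rw [hξ, xiOf]
    apply div_nonneg
    · exact Real.log_nonneg ((one_le_div hαm).2 hβm.le)
    · exact Real.log_nonneg ((one_le_div hβp).2 hαp.le)
  -- the 0/1 Bernoulli families indexed by pairs
  have h01p : ∀ (p : {p : Fin n × Fin n // p.1 < p.2}) ω,
      max (A ω p.1.1 p.1.2) 0 = 0 ∨ max (A ω p.1.1 p.1.2) 0 = 1 := by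
    intro p ω
    rcases hA.vals ω p.1.1 p.1.2 with h|h|h
    · right; rw [h]; norm_num
    · left; rw [h]; norm_num
    · left; rw [h]; norm_num
  have h01m : ∀ (p : {p : Fin n × Fin n // p.1 < p.2}) ω,
      max (-(A ω p.1.1 p.1.2)) 0 = 0 ∨ max (-(A ω p.1.1 p.1.2)) 0 = 1 := by
    intro p ω
    rcases hA.vals ω p.1.1 p.1.2 with h|h|h
    · left; rw [h]; norm_num
    · right; rw [h]; norm_num
    · left; rw [h]; norm_num
  have hmeasp : ∀ p : {p : Fin n × Fin n // p.1 < p.2},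
      Measurable (fun ω => max (A ω p.1.1 p.1.2) 0) :=
    fun p => (hA.meas p.1.1 p.1.2).max measurable_const
  have hmeasm : ∀ p : {p : Fin n × Fin n // p.1 < p.2},
      Measurable (fun ω => max (-(A ω p.1.1 p.1.2)) 0) :=
    fun p => (hA.meas p.1.1 p.1.2).neg.max measurable_const
  have hindp : iIndepFun
      (fun (p : {p : Fin n × Fin n // p.1 < p.2}) ω => max (A ω p.1.1 p.1.2) 0) P := by
    have := hA.indep.comp (fun _ => fun x : ℝ => max x 0)
      (fun _ => measurable_id.max measurable_const)
    exact this
  have hindm : iIndepFun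
      (fun (p : {p : Fin n × Fin n // p.1 < p.2}) ω => max (-(A ω p.1.1 p.1.2)) 0) P := by
    have := hA.indep.comp (fun _ => fun x : ℝ => max (-x) 0)
      (fun _ => measurable_id.neg.max measurable_const)
    exact this
  -- means of the sums
  have hsplitC : ∀ (C D : ℝ),
      (∑ i : Fin n, ∑ j : Fin n, (if i < j then C + D * (xs i * xs j) else 0))
      = C * (∑ i : Fin n, ∑ j : Fin n, if i < j then (1:ℝ) else 0)
        + D * (∑ i : Fin n, ∑ j : Fin n, if i < j then xs i * xs j else 0) := by
    intro C D
    rw [Finset.mul_sum, Finset.mul_sum, ← Finset.sum_add_distrib]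
    refine Finset.sum_congr rfl fun i _ => ?_
    rw [Finset.mul_sum, Finset.mul_sum, ← Finset.sum_add_distrib]
    refine Finset.sum_congr rfl fun j _ => ?_
    by_cases h : i < j <;> simp [h]
  have hmpval : (∑ p : {p : Fin n × Fin n // p.1 < p.2}, ∫ ω', max (A ω' p.1.1 p.1.2) 0 ∂P)
      = (pp + qp)/2 * (((n:ℝ)^2 - n)/2) + (pp - qp)/2 * (-((n:ℝ)/2)) := by
    have h1 : (∑ p : {p : Fin n × Fin n // p.1 < p.2}, ∫ ω', max (A ω' p.1.1 p.1.2) 0 ∂P)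
        = ∑ p : {p : Fin n × Fin n // p.1 < p.2},
            ((pp + qp)/2 + (pp - qp)/2 * (xs p.1.1 * xs p.1.2)) :=
      Finset.sum_congr rfl fun p _ => ssbm_pos_mean hA p.2
    have h2 := sum_pairs' (n := n) (fun i j => (pp + qp)/2 + (pp - qp)/2 * (xs i * xs j))
    rw [h1, h2, hsplitC, count_pairs, count_cross hA.labels hA.balanced]
  have hmmval : (∑ p : {p : Fin n × Fin n // p.1 < p.2}, ∫ ω', max (-(A ω' p.1.1 p.1.2)) 0 ∂P)
      = (pm + qm)/2 * (((n:ℝ)^2 - n)/2) + (pm - qm)/2 * (-((n:ℝ)/2)) := by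
    have h1 : (∑ p : {p : Fin n × Fin n // p.1 < p.2}, ∫ ω', max (-(A ω' p.1.1 p.1.2)) 0 ∂P)
        = ∑ p : {p : Fin n × Fin n // p.1 < p.2},
            ((pm + qm)/2 + (pm - qm)/2 * (xs p.1.1 * xs p.1.2)) :=
      Finset.sum_congr rfl fun p _ => ssbm_neg_mean hA p.2
    have h2 := sum_pairs' (n := n) (fun i j => (pm + qm)/2 + (pm - qm)/2 * (xs i * xs j))
    rw [h1, h2, hsplitC, count_pairs, count_cross hA.labels hA.balanced]
  -- entrywise description of Ã
  have hAt : ∀ ω (i j : Fin n),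
      Atil ξ A ω i j = max (A ω i j) 0 - ξ * max (-(A ω i j)) 0 := by
    intro ω i j
    simp [Atil, aPos, aNeg, Matrix.sub_apply, Matrix.smul_apply, smul_eq_mul]
  -- ρ in terms of the pair sums
  have hrho : ∀ ω, rhoOf ξ A ω =
      2 * ((∑ p : {p : Fin n × Fin n // p.1 < p.2}, max (A ω p.1.1 p.1.2) 0)
        - ξ * (∑ p : {p : Fin n × Fin n // p.1 < p.2}, max (-(A ω p.1.1 p.1.2)) 0)) / (n:ℝ)^2 := by
    intro ω
    have hsym : ∀ i j, Atil ξ A ω i j = Atil ξ A ω j i := by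
      intro i j; rw [hAt, hAt, hA.symm ω i j]
    have hsplit := sum_symm_split' (fun i j => Atil ξ A ω i j) hsym
    have hdiag : ∑ i, Atil ξ A ω i i = 0 := by
      refine Finset.sum_eq_zero fun i _ => ?_
      rw [hAt, hA.diag]; norm_num
    have h1 := sum_pairs' (n := n) (fun i j => max (A ω i j) 0)
    have h2 := sum_pairs' (n := n) (fun i j => max (-(A ω i j)) 0)
    have h3 : ∀ i j : Fin n, (if i < j then Atil ξ A ω i j else 0)
        = (if i < j then max (A ω i j) 0 else 0)
          - ξ * (if i < j then max (-(A ω i j)) 0 else 0) := by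
      intro i j; by_cases h : i < j <;> simp [h, hAt]
    have hup : (∑ i, ∑ j, if i < j then Atil ξ A ω i j else 0)
        = (∑ p : {p : Fin n × Fin n // p.1 < p.2}, max (A ω p.1.1 p.1.2) 0)
          - ξ * (∑ p : {p : Fin n × Fin n // p.1 < p.2}, max (-(A ω p.1.1 p.1.2)) 0) := by
      calc (∑ i, ∑ j, if i < j then Atil ξ A ω i j else 0)
          = ∑ i, ∑ j, ((if i < j then max (A ω i j) 0 else 0)
              - ξ * (if i < j then max (-(A ω i j)) 0 else 0)) :=
            Finset.sum_congr rfl fun i _ => Finset.sum_congr rfl fun j _ => h3 i j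
        _ = (∑ i, ∑ j, if i < j then max (A ω i j) 0 else 0)
            - ξ * (∑ i, ∑ j, if i < j then max (-(A ω i j)) 0 else 0) := by
            rw [Finset.mul_sum, ← Finset.sum_sub_distrib]
            refine Finset.sum_congr rfl fun i _ => ?_
            rw [Finset.mul_sum, ← Finset.sum_sub_distrib]
        _ = _ := by rw [← h1, ← h2]
    show (∑ i, ∑ j, Atil ξ A ω i j) / (n:ℝ)^2 = _
    rw [hsplit, hdiag, hup]
    ring
  -- integrability
  have hintp : ∀ p : {p : Fin n × Fin n // p.1 < p.2},
      Integrable (fun ω => max (A ω p.1.1 p.1.2) 0) P :=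
    fun p => bern_integrable (hmeasp p) (h01p p)
  have hintm : ∀ p : {p : Fin n × Fin n // p.1 < p.2},
      Integrable (fun ω => max (-(A ω p.1.1 p.1.2)) 0) P :=
    fun p => bern_integrable (hmeasm p) (h01m p)
  have hSpint : Integrable (fun ω => ∑ p : {p : Fin n × Fin n // p.1 < p.2},
      max (A ω p.1.1 p.1.2) 0) P := integrable_finset_sum _ (fun p _ => hintp p)
  have hSmint : Integrable (fun ω => ∑ p : {p : Fin n × Fin n // p.1 < p.2},
      max (-(A ω p.1.1 p.1.2)) 0) P := integrable_finset_sum _ (fun p _ => hintm p)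
  have hSpmean : ∫ ω, (∑ p : {p : Fin n × Fin n // p.1 < p.2}, max (A ω p.1.1 p.1.2) 0) ∂P
      = ∑ p : {p : Fin n × Fin n // p.1 < p.2}, ∫ ω', max (A ω' p.1.1 p.1.2) 0 ∂P :=
    integral_finset_sum _ (fun p _ => hintp p)
  have hSmmean : ∫ ω, (∑ p : {p : Fin n × Fin n // p.1 < p.2}, max (-(A ω p.1.1 p.1.2)) 0) ∂P
      = ∑ p : {p : Fin n × Fin n // p.1 < p.2}, ∫ ω', max (-(A ω' p.1.1 p.1.2)) 0 ∂P :=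
    integral_finset_sum _ (fun p _ => hintm p)
  -- expectation of ρ
  have hEint : ∫ ω, rhoOf ξ A ω ∂P =
      2 * ((∑ p : {p : Fin n × Fin n // p.1 < p.2}, ∫ ω', max (A ω' p.1.1 p.1.2) 0 ∂P)
        - ξ * (∑ p : {p : Fin n × Fin n // p.1 < p.2}, ∫ ω', max (-(A ω' p.1.1 p.1.2)) 0 ∂P))
        / (n:ℝ)^2 := by
    have heq : (fun ω => rhoOf ξ A ω) = fun ω =>
        (2/(n:ℝ)^2) * (∑ p : {p : Fin n × Fin n // p.1 < p.2}, max (A ω p.1.1 p.1.2) 0)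
        - (2*ξ/(n:ℝ)^2) * (∑ p : {p : Fin n × Fin n // p.1 < p.2}, max (-(A ω p.1.1 p.1.2)) 0) := by
      funext ω
      rw [hrho ω]
      field_simp
    rw [heq, integral_sub (hSpint.const_mul _) (hSmint.const_mul _),
      integral_const_mul, integral_const_mul, hSpmean, hSmmean]
    field_simp
  have hC : ((pp + qp) - ξ * (pm + qm)) / 2 - (pp - ξ * pm) / (n:ℝ) =
      2 * ((∑ p : {p : Fin n × Fin n // p.1 < p.2}, ∫ ω', max (A ω' p.1.1 p.1.2) 0 ∂P)
        - ξ * (∑ p : {p : Fin n × Fin n // p.1 < p.2}, ∫ ω', max (-(A ω' p.1.1 p.1.2)) 0 ∂P))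
        / (n:ℝ)^2 := by
    rw [hmpval, hmmval]
    field_simp
    ring
  constructor
  · exact hEint.trans hC.symm
  -- concentration
  by_cases hn4 : 4 ≤ n
  case neg =>
    -- n = 2 or n = 3; the bound is vacuous
    rcases (by omega : n = 2 ∨ n = 3) with h2|h3
    · subst h2
      have hsp1 : (0:ℝ) < 2*(αp+βp+1) := by linarith
      have ha : (1:ℝ)/2 ≤ (2:ℝ)^(-(1/(2*(αp+βp+1)))) := by
        rw [show (1:ℝ)/2 = (2:ℝ)^(-(1:ℝ)) by rw [Real.rpow_neg_one]; norm_num]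
        apply (Real.rpow_le_rpow_left_iff one_lt_two).2
        rw [neg_le_neg_iff, div_le_one hsp1]
        linarith
      have hb : 0 < (2:ℝ)^(-(1/(2*(αm+βm+1)))) := Real.rpow_pos_of_pos two_pos _
      have hcast : ((2:ℕ):ℝ) = (2:ℝ) := by norm_num
      rw [ge_iff_le, hcast]
      calc 1 - 2*(2:ℝ)^(-(1/(2*(αp+βp+1)))) - 2*(2:ℝ)^(-(1/(2*(αm+βm+1)))) ≤ 0 := by linarith
        _ ≤ _ := ENNReal.toReal_nonneg
    · subst h3
      exact absurd heven (by decide)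
  case pos =>
  have hsp : 1 < αp + βp + 1 := by linarith
  have hsm : 1 < αm + βm + 1 := by linarith
  have hmple : (∑ p : {p : Fin n × Fin n // p.1 < p.2}, ∫ ω', max (A ω' p.1.1 p.1.2) 0 ∂P)
      ≤ (n:ℝ) * Real.log n / 4 * ((αp + βp + 1) - 1) := by
    have hval2 : (pp + qp)/2 * (((n:ℝ)^2 - n)/2) + (pp - qp)/2 * (-((n:ℝ)/2))
        = (αp + βp) * Real.log n * (n:ℝ)/4 - αp * Real.log n/2 := by
      rw [hpp, hqp]; field_simp; ring
    rw [hmpval, hval2,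
      show (n:ℝ) * Real.log n / 4 * ((αp + βp + 1) - 1)
        = (αp + βp) * Real.log n * (n:ℝ)/4 by ring]
    linarith [mul_pos hαp0 hL0]
  have hmmle : (∑ p : {p : Fin n × Fin n // p.1 < p.2}, ∫ ω', max (-(A ω' p.1.1 p.1.2)) 0 ∂P)
      ≤ (n:ℝ) * Real.log n / 4 * ((αm + βm + 1) - 1) := by
    have hval2 : (pm + qm)/2 * (((n:ℝ)^2 - n)/2) + (pm - qm)/2 * (-((n:ℝ)/2))
        = (αm + βm) * Real.log n * (n:ℝ)/4 - αm * Real.log n/2 := by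
      rw [hpm, hqm]; field_simp; ring
    rw [hmmval, hval2,
      show (n:ℝ) * Real.log n / 4 * ((αm + βm + 1) - 1)
        = (αm + βm) * Real.log n * (n:ℝ)/4 by ring]
    linarith [mul_pos hαm hL0]
  have htailp : (P {ω | Real.sqrt n * Real.log n / 2 <
      |∑ p : {p : Fin n × Fin n // p.1 < p.2},
        (max (A ω p.1.1 p.1.2) 0 - ∫ ω', max (A ω' p.1.1 p.1.2) 0 ∂P)|}).toReal ≤
      2 * (n:ℝ) ^ (-(1/(2*(αp + βp + 1)))) :=
    bernoulli_tail _ hmeasp hindp h01p n hn4 (αp + βp + 1) hsp hmple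
  have htailm : (P {ω | Real.sqrt n * Real.log n / 2 <
      |∑ p : {p : Fin n × Fin n // p.1 < p.2},
        (max (-(A ω p.1.1 p.1.2)) 0 - ∫ ω', max (-(A ω' p.1.1 p.1.2)) 0 ∂P)|}).toReal ≤
      2 * (n:ℝ) ^ (-(1/(2*(αm + βm + 1)))) :=
    bernoulli_tail _ hmeasm hindm h01m n hn4 (αm + βm + 1) hsm hmmle
  -- measurability of ρ
  have hrho_meas : Measurable (fun ω => rhoOf ξ A ω) := by
    unfold rhoOf
    apply Measurable.div_const
    apply Finset.measurable_sum
    intro i _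
    apply Finset.measurable_sum
    intro j _
    have hfun : (fun ω => Atil ξ A ω i j) =
        fun ω => max (A ω i j) 0 - ξ * max (-(A ω i j)) 0 := funext fun ω => hAt ω i j
    rw [hfun]
    exact ((hA.meas i j).max measurable_const).sub
      ((((hA.meas i j).neg).max measurable_const).const_mul ξ)
  have hGmeas : MeasurableSet {ω | |rhoOf ξ A ω -
      (((pp + qp) - ξ * (pm + qm)) / 2 - (pp - ξ * pm) / (n:ℝ))| ≤
      (1 + ξ) * Real.log n / (n : ℝ) ^ ((3 : ℝ) / 2)} :=
    measurableSet_le ((hrho_meas.sub measurable_const).abs) measurable_const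
  -- the bound constant
  have hsqrt0 : 0 < Real.sqrt n := Real.sqrt_pos.2 hn0
  have hsq : Real.sqrt n * Real.sqrt n = (n:ℝ) := Real.mul_self_sqrt hn0.le
  have hpow : (n:ℝ) ^ ((3:ℝ)/2) = (n:ℝ) * Real.sqrt n := by
    rw [show ((3:ℝ)/2) = 1 + 1/2 by norm_num, Real.rpow_add hn0, Real.rpow_one,
      ← Real.sqrt_eq_rpow]
  have hbnd : 2 * ((1 + ξ) * (Real.sqrt n * Real.log n / 2)) / (n:ℝ)^2
      = (1 + ξ) * Real.log n / (n:ℝ) ^ ((3:ℝ)/2) := by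
    rw [hpow, div_eq_div_iff (by positivity) (by positivity)]
    linear_combination ((1 + ξ) * Real.log n * (n:ℝ)) * hsq
  have habs_key : ∀ X Y : ℝ, |X| ≤ Real.sqrt n * Real.log n / 2 →
      |Y| ≤ Real.sqrt n * Real.log n / 2 →
      |2 * (X - ξ * Y) / (n:ℝ)^2| ≤ (1 + ξ) * Real.log n / (n:ℝ) ^ ((3:ℝ)/2) := by
    intro X Y hX hY
    have h1 : |X - ξ * Y| ≤ (1 + ξ) * (Real.sqrt n * Real.log n / 2) := by
      calc |X - ξ * Y| ≤ |X| + |ξ * Y| := abs_sub X (ξ * Y)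
        _ = |X| + ξ * |Y| := by rw [abs_mul, abs_of_nonneg hξ0]
        _ ≤ Real.sqrt n * Real.log n / 2 + ξ * (Real.sqrt n * Real.log n / 2) :=
            add_le_add hX (mul_le_mul_of_nonneg_left hY hξ0)
        _ = (1 + ξ) * (Real.sqrt n * Real.log n / 2) := by ring
    calc |2 * (X - ξ * Y) / (n:ℝ)^2| = 2 * |X - ξ * Y| / (n:ℝ)^2 := by
          rw [abs_div, abs_mul, abs_two, abs_of_nonneg (by positivity : (0:ℝ) ≤ (n:ℝ)^2)]
      _ ≤ 2 * ((1 + ξ) * (Real.sqrt n * Real.log n / 2)) / (n:ℝ)^2 := by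
          gcongr
      _ = (1 + ξ) * Real.log n / (n:ℝ) ^ ((3:ℝ)/2) := hbnd
  -- inclusion of complements
  have hsub : {ω | |rhoOf ξ A ω -
        (((pp + qp) - ξ * (pm + qm)) / 2 - (pp - ξ * pm) / (n:ℝ))| ≤
        (1 + ξ) * Real.log n / (n : ℝ) ^ ((3 : ℝ) / 2)}ᶜ ⊆
      {ω | Real.sqrt n * Real.log n / 2 <
        |∑ p : {p : Fin n × Fin n // p.1 < p.2},
          (max (A ω p.1.1 p.1.2) 0 - ∫ ω', max (A ω' p.1.1 p.1.2) 0 ∂P)|} ∪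
      {ω | Real.sqrt n * Real.log n / 2 <
        |∑ p : {p : Fin n × Fin n // p.1 < p.2},
          (max (-(A ω p.1.1 p.1.2)) 0 - ∫ ω', max (-(A ω' p.1.1 p.1.2)) 0 ∂P)|} := by
    intro ω hω
    by_contra hcon
    rw [Set.mem_union] at hcon
    push_neg at hcon
    obtain ⟨hcp, hcm⟩ := hcon
    simp only [Set.mem_setOf_eq, not_lt] at hcp hcm
    rw [Finset.sum_sub_distrib] at hcp hcm
    apply hω
    simp only [Set.mem_setOf_eq]
    have hd : rhoOf ξ A ω - (((pp + qp) - ξ * (pm + qm)) / 2 - (pp - ξ * pm) / (n:ℝ))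
        = 2 * (((∑ p : {p : Fin n × Fin n // p.1 < p.2}, max (A ω p.1.1 p.1.2) 0)
            - (∑ p : {p : Fin n × Fin n // p.1 < p.2}, ∫ ω', max (A ω' p.1.1 p.1.2) 0 ∂P))
          - ξ * ((∑ p : {p : Fin n × Fin n // p.1 < p.2}, max (-(A ω p.1.1 p.1.2)) 0)
            - (∑ p : {p : Fin n × Fin n // p.1 < p.2}, ∫ ω', max (-(A ω' p.1.1 p.1.2)) 0 ∂P)))
          / (n:ℝ)^2 := by
      rw [hrho ω, hC]
      ring
    rw [hd]
    exact habs_key _ _ hcp hcm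
  -- assembling the probability bound
  have hPc : (P ({ω | |rhoOf ξ A ω -
        (((pp + qp) - ξ * (pm + qm)) / 2 - (pp - ξ * pm) / (n:ℝ))| ≤
        (1 + ξ) * Real.log n / (n : ℝ) ^ ((3 : ℝ) / 2)}ᶜ)).toReal ≤
      2 * (n:ℝ) ^ (-(1/(2*(αp + βp + 1)))) + 2 * (n:ℝ) ^ (-(1/(2*(αm + βm + 1)))) := by
    have h1 := le_trans (measure_mono (μ := P) hsub) (measure_union_le _ _)
    have h2 := ENNReal.toReal_mono
      (ENNReal.add_ne_top.2 ⟨measure_ne_top P _, measure_ne_top P _⟩) h1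
    rw [ENNReal.toReal_add (measure_ne_top P _) (measure_ne_top P _)] at h2
    exact h2.trans (add_le_add htailp htailm)
  have hcompl := prob_add_prob_compl (μ := P) hGmeas
  have hcompl' : (P {ω | |rhoOf ξ A ω -
        (((pp + qp) - ξ * (pm + qm)) / 2 - (pp - ξ * pm) / (n:ℝ))| ≤
        (1 + ξ) * Real.log n / (n : ℝ) ^ ((3 : ℝ) / 2)}).toReal
      + (P ({ω | |rhoOf ξ A ω -
        (((pp + qp) - ξ * (pm + qm)) / 2 - (pp - ξ * pm) / (n:ℝ))| ≤
        (1 + ξ) * Real.log n / (n : ℝ) ^ ((3 : ℝ) / 2)}ᶜ)).toReal = 1 := by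
    rw [← ENNReal.toReal_add (measure_ne_top P _) (measure_ne_top P _), hcompl,
      ENNReal.toReal_one]
  rw [ge_iff_le]
  linarith
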